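/- Let n = 2^r with r ≥ 2. A sequence in Z_n is a U(n)-extremal sequence for the Gao constant if and only if it is U(n)-equivalent to a sequence S of length n + r − 1 such that: for each i with 0 ≤ i ≤ r − 2, the element 2^i occurs exactly once as a term of S; the element 2^{r−1} occurs an odd number of times as a term of S; and all remaining terms of S are zero. -/

import Mathlib

open Classical in
/-- The number of terms of the sequence `S` satisfying the predicate `P`. -/
noncomputable def pcount {α : Type*} (P : α → Prop) (S : List α) : ℕ :=
  S.countP fun x => decide (P x)

/-- `S` is an `A`-weighted zero-sum sequence in `ZMod n`: there are weights
`a i ∈ A` with `∑ a i * x i = 0`. -/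
def IsWZSum {n : ℕ} (A : Set (ZMod n)) (S : List (ZMod n)) : Prop :=
  ∃ w : List (ZMod n), w.length = S.length ∧ (∀ a ∈ w, a ∈ A) ∧
    (List.zipWith (· * ·) w S).sum = 0

/-- `S` has an `A`-weighted zero-sum subsequence of length `t ≥ 1`. -/
def HasWZSS {n : ℕ} (A : Set (ZMod n)) (S : List (ZMod n)) (t : ℕ) : Prop :=
  0 < t ∧ ∃ T : List (ZMod n), T.Sublist S ∧ T.length = t ∧ IsWZSum A T

/-- `S` has a nonempty `A`-weighted zero-sum subsequence. -/
def HasWZS {n : ℕ} (A : Set (ZMod n)) (S : List (ZMod n)) : Prop :=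
  ∃ T : List (ZMod n), T.Sublist S ∧ T ≠ [] ∧ IsWZSum A T

/-- The `A`-weighted Davenport constant `D_A(n)`: the least `k > 0` such that every
sequence of length `k` in `ZMod n` has a nonempty `A`-weighted zero-sum subsequence. -/
noncomputable def DavC (n : ℕ) (A : Set (ZMod n)) : ℕ :=
  sInf {k | 0 < k ∧ ∀ S : List (ZMod n), S.length = k → HasWZS A S}

/-- The `A`-weighted Gao constant `E_A(n)`: the least `k > 0` such that every
sequence of length `k` in `ZMod n` has an `A`-weighted zero-sum subsequence of length `n`. -/
noncomputable def GaoC (n : ℕ) (A : Set (ZMod n)) : ℕ :=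
  sInf {k | 0 < k ∧ ∀ S : List (ZMod n), S.length = k → HasWZSS A S n}

/-- The set of units of `ZMod n`. -/
def U (n : ℕ) : Set (ZMod n) := {x | IsUnit x}

/-- An `A`-extremal sequence for the Gao constant: a sequence of length `E_A(n) - 1`
with no `A`-weighted zero-sum subsequence of length `n`. -/
def IsGaoExtremal (n : ℕ) (A : Set (ZMod n)) (S : List (ZMod n)) : Prop :=
  S.length = GaoC n A - 1 ∧ ¬ HasWZSS A S n

/-- `S` and `T` are `A`-equivalent: there are a unit `c`, weights `a i ∈ A` and a
permutation matching the multiset of terms `c * y j` with the multiset `a i * x i`. -/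
def AEquiv {n : ℕ} (A : Set (ZMod n)) (S T : List (ZMod n)) : Prop :=
  ∃ c : ZMod n, IsUnit c ∧ ∃ w : List (ZMod n), w.length = S.length ∧
    (∀ a ∈ w, a ∈ A) ∧ (T.map fun y => c * y).Perm (List.zipWith (· * ·) w S)

open List

section Aux
variable {r : ℕ}

/-- 2-adic valuation on `ZMod (2^r)`, with `nu r 0 = r`. -/
noncomputable def nu (r : ℕ) (x : ZMod (2^r)) : ℕ :=
  if x = 0 then r else (x.val).factorization 2

lemma nu_zero : nu r (0 : ZMod (2^r)) = r := if_pos rfl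

lemma two_pow_pos (r : ℕ) : 0 < 2^r := Nat.pow_pos (by norm_num)

instance : NeZero (2^r) := ⟨(two_pow_pos r).ne'⟩

lemma nu_lt {x : ZMod (2^r)} (hx : x ≠ 0) : nu r x < r := by
  have hval : x.val ≠ 0 := fun h => hx ((ZMod.val_eq_zero x).1 h)
  have hdvd : 2 ^ (x.val.factorization 2) ∣ x.val := Nat.ordProj_dvd _ _
  have hlt : x.val < 2 ^ r := ZMod.val_lt x
  have h2 : 2 ^ (x.val.factorization 2) < 2 ^ r :=
    lt_of_le_of_lt (Nat.le_of_dvd (Nat.pos_of_ne_zero hval) hdvd) hlt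
  have := (Nat.pow_lt_pow_iff_right (a := 2) (by norm_num)).1 h2
  simpa [nu, hx] using this

lemma nu_le (x : ZMod (2^r)) : nu r x ≤ r := by
  by_cases hx : x = 0
  · simp [hx, nu_zero]
  · exact (nu_lt hx).le

lemma nu_eq_r_iff {x : ZMod (2^r)} : nu r x = r ↔ x = 0 := by
  constructor
  · intro h; by_contra hx; exact absurd h (nu_lt hx).ne
  · intro h; simp [h, nu_zero]

lemma two_pow_val {i : ℕ} (hi : i < r) : ((2 : ZMod (2^r)) ^ i).val = 2 ^ i := by
  have : ((2 : ZMod (2^r)) ^ i) = ((2 ^ i : ℕ) : ZMod (2^r)) := by push_cast; ring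
  rw [this, ZMod.val_cast_of_lt]
  exact (Nat.pow_lt_pow_iff_right (a := 2) (by norm_num)).2 hi

lemma two_pow_ne_zero {i : ℕ} (hi : i < r) : ((2 : ZMod (2^r)) ^ i) ≠ 0 := by
  intro h
  have := two_pow_val hi
  rw [h] at this
  simp at this
  exact absurd this (Nat.pow_pos (n := i) (by norm_num : 0 < 2)).ne

lemma isUnit_of_odd_nat {m : ℕ} (hm : ¬ 2 ∣ m) : IsUnit ((m : ℕ) : ZMod (2^r)) := by
  rw [ZMod.isUnit_iff_coprime]
  exact Nat.Coprime.pow_right r (Nat.coprime_comm.1 ((Nat.prime_two.coprime_iff_not_dvd).2 hm))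

lemma exists_unit_eq {x : ZMod (2^r)} (hx : x ≠ 0) :
    ∃ u : ZMod (2^r), IsUnit u ∧ x = 2 ^ (nu r x) * u := by
  have hval : x.val ≠ 0 := fun h => hx ((ZMod.val_eq_zero x).1 h)
  have hfac : 2 ^ (x.val.factorization 2) * (x.val / 2 ^ (x.val.factorization 2)) = x.val :=
    Nat.ordProj_mul_ordCompl_eq_self _ _
  have hodd : ¬ 2 ∣ (x.val / 2 ^ (x.val.factorization 2)) :=
    Nat.not_dvd_ordCompl Nat.prime_two hval
  refine ⟨((x.val / 2 ^ (x.val.factorization 2) : ℕ) : ZMod (2^r)), isUnit_of_odd_nat hodd, ?_⟩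
  have hx' : ((x.val : ℕ) : ZMod (2^r)) = x := ZMod.natCast_zmod_val x
  have hnu : nu r x = x.val.factorization 2 := by simp [nu, hx]
  calc x = ((x.val : ℕ) : ZMod (2^r)) := hx'.symm
    _ = ((2 ^ (x.val.factorization 2) * (x.val / 2 ^ (x.val.factorization 2)) : ℕ) : ZMod (2^r)) := by
        rw [hfac]
    _ = 2 ^ (nu r x) * ((x.val / 2 ^ (x.val.factorization 2) : ℕ) : ZMod (2^r)) := by
        rw [hnu]; push_cast; ring

lemma isUnit_or_two_dvd (hr : 1 ≤ r) (x : ZMod (2^r)) : IsUnit x ∨ (2 : ZMod (2^r)) ∣ x := by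
  by_cases h : 2 ∣ x.val
  · right
    obtain ⟨k, hk⟩ := h
    have hx' : ((x.val : ℕ) : ZMod (2^r)) = x := ZMod.natCast_zmod_val x
    exact ⟨(k : ℕ), by rw [← hx', hk]; push_cast; ring⟩
  · left
    have hx' : ((x.val : ℕ) : ZMod (2^r)) = x := ZMod.natCast_zmod_val x
    rw [← hx']
    exact isUnit_of_odd_nat h

lemma not_two_dvd_of_isUnit (hr : 1 ≤ r) {x : ZMod (2^r)} (hx : IsUnit x) :
    ¬ (2 : ZMod (2^r)) ∣ x := by
  rintro ⟨y, rfl⟩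
  have h2 : IsUnit (2 : ZMod (2^r)) := isUnit_of_mul_isUnit_left hx
  have : IsUnit (((2:ℕ) : ZMod (2^r))) := by push_cast at h2 ⊢; exact h2
  rw [ZMod.isUnit_iff_coprime] at this
  have : Nat.Coprime 2 (2^r) := this
  have h2r : (2:ℕ) ∣ 2^r := dvd_pow_self 2 (by omega)
  have := Nat.Coprime.eq_one_of_dvd this h2r
  norm_num at this

lemma isUnit_of_not_two_dvd (hr : 1 ≤ r) {x : ZMod (2^r)} (hx : ¬ (2 : ZMod (2^r)) ∣ x) :
    IsUnit x := (isUnit_or_two_dvd hr x).resolve_right hx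

lemma isUnit_sub_two_mul (hr : 1 ≤ r) {u : ZMod (2^r)} (hu : IsUnit u) (t : ZMod (2^r)) :
    IsUnit (u - 2 * t) := by
  apply isUnit_of_not_two_dvd hr
  intro ⟨y, hy⟩
  exact not_two_dvd_of_isUnit hr hu ⟨y + t, by rw [mul_add, ← hy]; ring⟩

lemma nu_eq_of (hr : 1 ≤ r) {x u : ZMod (2^r)} {v : ℕ} (hv : v < r) (hu : IsUnit u)
    (hx : x = 2 ^ v * u) : nu r x = v := by
  have hxne : x ≠ 0 := by
    rw [hx]
    intro h
    rcases hu with ⟨w, rfl⟩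
    exact two_pow_ne_zero hv (by
      have := congrArg (· * ((w⁻¹ : (ZMod (2^r))ˣ) : ZMod (2^r))) h
      simpa [mul_assoc] using this)
  obtain ⟨u', hu', hx'⟩ := exists_unit_eq hxne
  have hw : nu r x < r := nu_lt hxne
  set w := nu r x with hwdef
  -- 2^v * u = 2^w * u'
  have key : (2 : ZMod (2^r)) ^ v * u = 2 ^ w * u' := by rw [← hx, hx']
  rcases lt_trichotomy v w with h | h | h
  · exfalso
    have : (2 : ZMod (2^r)) ^ v * (u - 2 ^ (w - v) * u') = 0 := by
      have h2 : (2 : ZMod (2^r)) ^ w = 2 ^ v * 2 ^ (w - v) := by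
        rw [← pow_add]; congr 1; omega
      rw [mul_sub, key, h2]; ring
    have hunit : IsUnit (u - 2 ^ (w - v) * u') := by
      have : u - 2 ^ (w - v) * u' = u - 2 * (2 ^ (w - v - 1) * u') := by
        have h2 : (2 : ZMod (2^r)) ^ (w - v) = 2 * 2 ^ (w - v - 1) := by
          rw [← pow_succ']; congr 1; omega
        rw [h2]; ring
      rw [this]
      exact isUnit_sub_two_mul hr hu _
    rcases hunit with ⟨c, hc⟩
    apply two_pow_ne_zero (lt_trans h hw)
    have := congrArg (· * ((c⁻¹ : (ZMod (2^r))ˣ) : ZMod (2^r))) this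
    simpa [← hc, mul_assoc] using this
  · exact h.symm
  · exfalso
    have : (2 : ZMod (2^r)) ^ w * (u' - 2 ^ (v - w) * u) = 0 := by
      have h2 : (2 : ZMod (2^r)) ^ v = 2 ^ w * 2 ^ (v - w) := by
        rw [← pow_add]; congr 1; omega
      rw [mul_sub, ← key, h2]; ring
    have hunit : IsUnit (u' - 2 ^ (v - w) * u) := by
      have heq : u' - 2 ^ (v - w) * u = u' - 2 * (2 ^ (v - w - 1) * u) := by
        have h2 : (2 : ZMod (2^r)) ^ (v - w) = 2 * 2 ^ (v - w - 1) := by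
          rw [← pow_succ']; congr 1; omega
        rw [h2]; ring
      rw [heq]
      exact isUnit_sub_two_mul hr hu' _
    rcases hunit with ⟨c, hc⟩
    apply two_pow_ne_zero hw
    have := congrArg (· * ((c⁻¹ : (ZMod (2^r))ˣ) : ZMod (2^r))) this
    simpa [← hc, mul_assoc] using this

lemma nu_two_pow (hr : 1 ≤ r) {i : ℕ} (hi : i < r) : nu r ((2 : ZMod (2^r)) ^ i) = i :=
  nu_eq_of hr hi isUnit_one (by ring)

lemma two_pow_inj (hr : 1 ≤ r) {i j : ℕ} (hi : i < r) (hj : j < r) :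
    (2 : ZMod (2^r)) ^ i = 2 ^ j ↔ i = j := by
  constructor
  · intro h
    have := nu_two_pow hr hi
    rw [h, nu_two_pow hr hj] at this
    omega
  · rintro rfl; rfl

lemma nu_unit_mul (hr : 1 ≤ r) {a : ZMod (2^r)} (ha : IsUnit a) (x : ZMod (2^r)) :
    nu r (a * x) = nu r x := by
  by_cases hx : x = 0
  · simp [hx]
  · obtain ⟨u, hu, hxe⟩ := exists_unit_eq hx
    refine nu_eq_of hr (nu_lt hx) (ha.mul hu) ?_
    conv_lhs => rw [hxe]
    ring

section Cast
variable {r : ℕ}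

lemma unit_mul_two_pow (v : ℕ) {u : ZMod (2^(v+1))} (hu : IsUnit u) :
    (2 : ZMod (2^(v+1))) ^ v * u = 2 ^ v := by
  have hx' : ((u.val : ℕ) : ZMod (2^(v+1))) = u := ZMod.natCast_zmod_val u
  have hodd : ¬ 2 ∣ u.val := by
    intro hdvd
    rw [← hx'] at hu
    rw [ZMod.isUnit_iff_coprime] at hu
    have h2 : (2:ℕ) ∣ 2^(v+1) := dvd_pow_self 2 (by omega)
    have := Nat.eq_one_of_dvd_coprimes hu hdvd h2
    norm_num at this
  have hval : u.val = 2 * (u.val / 2) + 1 := by omega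
  have : u = ((2 * (u.val / 2) + 1 : ℕ) : ZMod (2^(v+1))) := by rw [← hval, hx']
  rw [this]
  push_cast
  have h0 : ((2:ZMod (2^(v+1)))^(v+1)) = 0 := by
    have : ((2^(v+1) : ℕ) : ZMod (2^(v+1))) = 0 := ZMod.natCast_self _
    push_cast at this
    exact this
  linear_combination ((u.val / 2 : ℕ) : ZMod (2^(v+1))) * h0

lemma sum_map_ite {α β : Type*} [AddCommMonoid β] (p : α → Bool) (g : α → β) (c : β)
    (y : List α) (h : ∀ x ∈ y, g x = if p x then c else 0) :
    (y.map g).sum = (y.countP p) • c := by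
  induction y with
  | nil => simp
  | cons a l ih =>
    have ha := h a (List.mem_cons_self)
    have hl := ih (fun x hx => h x (List.mem_cons_of_mem a hx))
    by_cases hp : p a
    · simp [List.countP_cons, hp, ha, hl, succ_nsmul, add_comm]
    · simp [List.countP_cons, hp, ha, hl]

lemma even_countP_min {v : ℕ} (hv : v < r) (y : List (ZMod (2^r)))
    (hmin : ∀ x ∈ y, v ≤ nu r x) (hsum : y.sum = 0) :
    2 ∣ y.countP (fun x => decide (nu r x = v)) := by
  have hdvd : (2:ℕ)^(v+1) ∣ 2^r := pow_dvd_pow 2 (by omega)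
  set f := ZMod.castHom hdvd (ZMod (2^(v+1))) with hf
  have key : ∀ x ∈ y, f x = if (decide (nu r x = v) : Bool) then (2:ZMod (2^(v+1)))^v else 0 := by
    intro x hx
    by_cases hxv : nu r x = v
    · suffices h : f x = (2:ZMod (2^(v+1)))^v by simpa [hxv] using h
      have hxne : x ≠ 0 := by
        intro h0; rw [h0, nu_zero] at hxv; omega
      obtain ⟨u, hu, hxe⟩ := exists_unit_eq hxne
      rw [hxv] at hxe
      rw [hxe, map_mul, map_pow]
      have h2 : f 2 = 2 := by
        have : ((2:ℕ) : ZMod (2^r)) = 2 := by push_cast; rfl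
        rw [← this, map_natCast]; push_cast; rfl
      rw [h2]
      exact unit_mul_two_pow v (hu.map f)
    · suffices h : f x = 0 by simpa [hxv] using h
      by_cases hx0 : x = 0
      · rw [hx0, map_zero]
      · obtain ⟨u, hu, hxe⟩ := exists_unit_eq hx0
        have hge : v + 1 ≤ nu r x := by
          have := hmin x hx; omega
        rw [hxe, map_mul, map_pow]
        have h2 : f 2 = 2 := by
          have : ((2:ℕ) : ZMod (2^r)) = 2 := by push_cast; rfl
          rw [← this, map_natCast]; push_cast; rfl
        rw [h2]
        have h0 : ((2:ZMod (2^(v+1)))^(v+1)) = 0 := by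
          have : ((2^(v+1) : ℕ) : ZMod (2^(v+1))) = 0 := ZMod.natCast_self _
          push_cast at this
          exact this
        have : (2:ZMod (2^(v+1)))^(nu r x) = 0 := by
          have : (2:ZMod (2^(v+1)))^(nu r x) = 2^(v+1) * 2^(nu r x - (v+1)) := by
            rw [← pow_add]; congr 1; omega
          rw [this, h0, zero_mul]
        rw [this, zero_mul]
  have hmapsum : (y.map f).sum = (y.countP (fun x => decide (nu r x = v))) • (2:ZMod (2^(v+1)))^v :=
    sum_map_ite _ _ _ _ key
  have hzero : (y.map f).sum = 0 := by
    rw [← map_list_sum f y, hsum, map_zero]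
  rw [hzero] at hmapsum
  set c := y.countP (fun x => decide (nu r x = v))
  have : ((c * 2^v : ℕ) : ZMod (2^(v+1))) = 0 := by
    push_cast
    rw [← nsmul_eq_mul]
    exact hmapsum.symm
  rw [ZMod.natCast_eq_zero_iff] at this
  obtain ⟨d, hd⟩ := this
  have h2v : 0 < 2^v := Nat.pow_pos (by norm_num)
  have : c * 2^v = 2 * d * 2^v := by rw [hd, pow_succ]; ring
  have : c = 2 * d := Nat.eq_of_mul_eq_mul_right h2v this
  exact ⟨d, this⟩

lemma zip_nu_map (hr : 1 ≤ r) : ∀ (T w : List (ZMod (2^r))), w.length = T.length →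
    (∀ a ∈ w, IsUnit a) →
    (List.zipWith (· * ·) w T).map (nu r) = T.map (nu r) := by
  intro T
  induction T with
  | nil => intro w _ _; simp
  | cons x T ih =>
    intro w hw hwu
    cases w with
    | nil => simp at hw
    | cons a w =>
      simp only [List.zipWith_cons_cons, List.map_cons]
      rw [nu_unit_mul hr (hwu a (List.mem_cons_self)) x,
        ih w (by simpa using hw) (fun b hb => hwu b (List.mem_cons_of_mem a hb))]

lemma even_countP_min' {v : ℕ} (hr : 1 ≤ r) (hv : v < r) (T w : List (ZMod (2^r)))
    (hw : w.length = T.length) (hwu : ∀ a ∈ w, IsUnit a)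
    (hsum : (List.zipWith (· * ·) w T).sum = 0)
    (hmin : ∀ x ∈ T, v ≤ nu r x) :
    2 ∣ T.countP (fun x => decide (nu r x = v)) := by
  have hmap := zip_nu_map hr T w hw hwu
  have h1 : T.countP (fun x => decide (nu r x = v)) =
      (List.zipWith (· * ·) w T).countP (fun x => decide (nu r x = v)) := by
    calc T.countP (fun x => decide (nu r x = v))
        = List.countP ((fun m => decide (m = v)) ∘ nu r) T := rfl
      _ = List.countP (fun m => decide (m = v)) (T.map (nu r)) :=
          List.countP_map.symm
      _ = List.countP (fun m => decide (m = v))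
          ((List.zipWith (· * ·) w T).map (nu r)) := by rw [hmap]
      _ = List.countP ((fun m => decide (m = v)) ∘ nu r) (List.zipWith (· * ·) w T) :=
          List.countP_map
      _ = (List.zipWith (· * ·) w T).countP (fun x => decide (nu r x = v)) := rfl
  rw [h1]
  apply even_countP_min hv _ _ hsum
  intro x hx
  have : nu r x ∈ (List.zipWith (· * ·) w T).map (nu r) := List.mem_map_of_mem hx
  rw [hmap] at this
  obtain ⟨x', hx', hx'e⟩ := List.mem_map.1 this
  rw [← hx'e]
  exact hmin x' hx'

end Cast

section Constr
variable {r : ℕ}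

lemma exists_unit_inv {x : ZMod (2^r)} (hx : x ≠ 0) :
    ∃ a : ZMod (2^r), IsUnit a ∧ a * x = 2 ^ (nu r x) := by
  obtain ⟨u, hu, hxe⟩ := exists_unit_eq hx
  rcases hu with ⟨w, rfl⟩
  refine ⟨((w⁻¹ : (ZMod (2^r))ˣ) : ZMod (2^r)), Units.isUnit _, ?_⟩
  conv_lhs => rw [hxe]
  rw [show ((w⁻¹ : (ZMod (2^r))ˣ) : ZMod (2^r)) * (2 ^ nu r x * (w : ZMod (2^r)))
    = 2 ^ nu r x * (((w⁻¹ : (ZMod (2^r))ˣ) : ZMod (2^r)) * (w : ZMod (2^r))) from by ring]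
  simp

open Classical in
noncomputable def wt (r : ℕ) (x : ZMod (2^r)) : ZMod (2^r) :=
  if hx : x = 0 then 1 else (exists_unit_inv hx).choose

lemma wt_unit (x : ZMod (2^r)) : IsUnit (wt r x) := by
  unfold wt
  split
  · exact isUnit_one
  · next hx => exact (exists_unit_inv hx).choose_spec.1

lemma wt_spec {x : ZMod (2^r)} (hx : x ≠ 0) : wt r x * x = 2 ^ (nu r x) := by
  unfold wt
  rw [dif_neg hx]
  exact (exists_unit_inv hx).choose_spec.2

lemma dvd2_sum {v : ℕ} (B : List (ZMod (2^r))) (hB : ∀ x ∈ B, v < nu r x) :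
    ∃ t : ZMod (2^r), B.sum = 2 ^ (v+1) * t := by
  induction B with
  | nil => exact ⟨0, by simp⟩
  | cons x B ih =>
    obtain ⟨t, ht⟩ := ih (fun y hy => hB y (List.mem_cons_of_mem x hy))
    by_cases hx : x = 0
    · exact ⟨t, by simp [hx, ht]⟩
    · obtain ⟨u, hu, hxe⟩ := exists_unit_eq hx
      have hge : v + 1 ≤ nu r x := hB x (List.mem_cons_self)
      refine ⟨2 ^ (nu r x - (v+1)) * u + t, ?_⟩
      have hx2 : x = 2^(v+1) * (2 ^ (nu r x - (v+1)) * u) := by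
        conv_lhs => rw [hxe]
        rw [← mul_assoc, ← pow_add]
        congr 2
        omega
      rw [List.sum_cons, ht]
      conv_lhs => rw [hx2]
      ring

lemma wzsum_construct (hr : 1 ≤ r) {v : ℕ} (hv : v < r) (A B : List (ZMod (2^r)))
    (hA : ∀ x ∈ A, nu r x = v) (hB : ∀ x ∈ B, v < nu r x)
    (heven : 2 ∣ A.length) (hpos : A ≠ []) :
    IsWZSum (U (2^r)) (A ++ B) := by
  cases A with
  | nil => exact absurd rfl hpos
  | cons a A' =>
  obtain ⟨t, ht⟩ := dvd2_sum B hB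
  have hodd : ¬ 2 ∣ A'.length := by
    simp only [List.length_cons] at heven; omega
  set L : ZMod (2^r) := ((A'.length : ℕ) : ZMod (2^r)) with hL
  have hLu : IsUnit L := isUnit_of_odd_nat hodd
  set b : ZMod (2^r) := -(L + 2 * t) with hb
  have hbu : IsUnit b := by
    apply isUnit_of_not_two_dvd hr
    rintro ⟨y, hy⟩
    apply not_two_dvd_of_isUnit hr hLu
    refine ⟨-y - t, ?_⟩
    have : L = -b - 2*t := by rw [hb]; ring
    rw [this, hy]; ring
  have ha0 : a ≠ 0 := by
    intro h0
    have := hA a (List.mem_cons_self)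
    rw [h0, nu_zero] at this
    omega
  have hanu : nu r a = v := hA a (List.mem_cons_self)
  set w : List (ZMod (2^r)) :=
    (b * wt r a) :: (A'.map (wt r) ++ List.replicate B.length 1) with hw
  refine ⟨w, ?_, ?_, ?_⟩
  · simp only [hw, List.length_cons, List.length_append, List.length_map,
      List.length_replicate, List.cons_append]
  · intro c hc
    simp only [hw, List.mem_cons, List.mem_append, List.mem_map, List.mem_replicate] at hc
    rcases hc with rfl | ⟨x, _, rfl⟩ | ⟨_, rfl⟩
    · exact hbu.mul (wt_unit a)
    · exact wt_unit x
    · exact isUnit_one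
  · have hsplit : List.zipWith (· * ·) w ((a :: A') ++ B)
        = (b * wt r a * a) :: (List.zipWith (· * ·) (A'.map (wt r)) A'
            ++ List.zipWith (· * ·) (List.replicate B.length 1) B) := by
      simp only [hw, List.cons_append, List.zipWith_cons_cons]
      congr 1
      exact List.zipWith_append (by simp)
    rw [hsplit]
    have h1 : List.zipWith (· * ·) (A'.map (wt r)) A' = A'.map (fun x => wt r x * x) := by
      rw [List.zipWith_map_left, List.zipWith_self]
    have h2 : A'.map (fun x => wt r x * x) = List.replicate A'.length ((2:ZMod (2^r))^v) := by
      rw [List.eq_replicate_iff]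
      refine ⟨by simp, ?_⟩
      intro y hy
      obtain ⟨x, hx, rfl⟩ := List.mem_map.1 hy
      have hxv : nu r x = v := hA x (List.mem_cons_of_mem a hx)
      have hx0 : x ≠ 0 := by
        intro h0; rw [h0, nu_zero] at hxv; omega
      rw [wt_spec hx0, hxv]
    have h3 : List.zipWith (· * ·) (List.replicate B.length 1) B = B := by
      have : List.replicate B.length (1 : ZMod (2^r)) = B.map (fun _ => 1) := by
        rw [List.map_const']
      rw [this, List.zipWith_map_left, List.zipWith_self]
      simp
    rw [h1, h2, h3]
    simp only [List.sum_cons, List.sum_append, List.sum_replicate]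
    rw [mul_assoc, wt_spec ha0, hanu, ht]
    rw [nsmul_eq_mul, ← hL, hb, pow_succ]
    ring

end Constr

section Perm
variable {n : ℕ}

lemma perm_zip_sum {M : Type*} [CommRing M] :
    ∀ {T T' : List M}, T.Perm T' → ∀ w : List M, w.length = T.length →
    ∃ w' : List M, w'.length = T'.length ∧ (∀ a ∈ w', a ∈ w) ∧
      (List.zipWith (· * ·) w' T').sum = (List.zipWith (· * ·) w T).sum := by
  intro T T' h
  induction h with
  | nil => intro w hw; exact ⟨[], by simp, by simp, by simp⟩
  | cons x h ih =>
    intro w hw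
    cases w with
    | nil => simp at hw
    | cons a w =>
      obtain ⟨w', h1, h2, h3⟩ := ih w (by simpa using hw)
      refine ⟨a :: w', by simpa using h1, ?_, by simp [h3]⟩
      intro b hb
      rcases List.mem_cons.1 hb with rfl | hb
      · exact List.mem_cons_self
      · exact List.mem_cons_of_mem _ (h2 b hb)
  | swap x y l =>
    intro w hw
    match w with
    | a :: b :: w =>
      refine ⟨b :: a :: w, by simpa using hw, ?_, ?_⟩
      · intro c hc
        rcases List.mem_cons.1 hc with rfl | hc
        · exact List.mem_cons_of_mem _ (List.mem_cons_self)
        · rcases List.mem_cons.1 hc with rfl | hc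
          · exact List.mem_cons_self
          · exact List.mem_cons_of_mem _ (List.mem_cons_of_mem _ hc)
      · simp only [List.zipWith_cons_cons, List.sum_cons]
        ring
  | trans h1 h2 ih1 ih2 =>
    intro w hw
    obtain ⟨w1, l1, m1, s1⟩ := ih1 w hw
    obtain ⟨w2, l2, m2, s2⟩ := ih2 w1 l1
    exact ⟨w2, l2, fun a ha => m1 a (m2 a ha), s2.trans s1⟩

lemma IsWZSum.perm {A : Set (ZMod n)} {T T' : List (ZMod n)} (h : T.Perm T')
    (hT : IsWZSum A T) : IsWZSum A T' := by
  obtain ⟨w, hw, hwA, hsum⟩ := hT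
  obtain ⟨w', h1, h2, h3⟩ := perm_zip_sum h w hw
  exact ⟨w', h1, fun a ha => hwA a (h2 a ha), by rw [h3, hsum]⟩

lemma hasWZSS_of_subperm {A : Set (ZMod n)} {S T : List (ZMod n)} {t : ℕ} (ht : 0 < t)
    (hsub : T <+~ S) (hlen : T.length = t) (hz : IsWZSum A T) : HasWZSS A S t := by
  obtain ⟨T', hperm, hsubl⟩ := hsub
  exact ⟨ht, T', hsubl, by rw [hperm.length_eq, hlen], hz.perm hperm.symm⟩

lemma hasWZSS_perm {A : Set (ZMod n)} {S S' : List (ZMod n)} {t : ℕ} (h : S.Perm S') :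
    HasWZSS A S t → HasWZSS A S' t := by
  rintro ⟨ht, T, hsub, hlen, hz⟩
  exact hasWZSS_of_subperm ht (hsub.subperm.trans h.subperm) hlen hz

lemma sublist_zipWith_of_sublist {M : Type*} [CommRing M] :
    ∀ {S T' : List M}, T' <+ S → ∀ w : List M, w.length = S.length →
    ∃ u : List M, u.length = T'.length ∧ (∀ a ∈ u, a ∈ w) ∧
      (List.zipWith (· * ·) u T') <+ (List.zipWith (· * ·) w S) := by
  intro S T' h
  induction h with
  | slnil => exact fun w _ => ⟨[], rfl, by simp, by simp⟩
  | cons x h ih =>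
    intro w hw
    cases w with
    | nil => simp at hw
    | cons a w =>
      obtain ⟨u, h1, h2, h3⟩ := ih w (by simpa using hw)
      exact ⟨u, h1, fun b hb => List.mem_cons_of_mem a (h2 b hb),
        by simpa only [List.zipWith_cons_cons] using h3.cons _⟩
  | cons_cons x h ih =>
    intro w hw
    cases w with
    | nil => simp at hw
    | cons a w =>
      obtain ⟨u, h1, h2, h3⟩ := ih w (by simpa using hw)
      refine ⟨a :: u, by simp [h1], ?_,
        by simpa only [List.zipWith_cons_cons] using h3.cons_cons _⟩
      intro b hb
      rcases List.mem_cons.1 hb with rfl | hb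
      · exact List.mem_cons_self
      · exact List.mem_cons_of_mem _ (h2 b hb)

lemma zip_combine {M : Type*} [CommRing M] :
    ∀ (T' w' u : List M), w'.length = T'.length → u.length = T'.length →
    (∀ a ∈ u, IsUnit a) → (∀ a ∈ w', IsUnit a) →
    ∃ ws : List M, ws.length = T'.length ∧ (∀ a ∈ ws, IsUnit a) ∧
      List.zipWith (· * ·) ws (List.zipWith (· * ·) u T') = List.zipWith (· * ·) w' T' := by
  intro T'
  induction T' with
  | nil => intro w' u hw hu _ _; exact ⟨[], rfl, by simp, by simp⟩
  | cons x T ih =>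
    intro w' u hw hu hun hwn
    cases w' with
    | nil => simp at hw
    | cons a w' =>
      cases u with
      | nil => simp at hu
      | cons b u =>
        obtain ⟨ws, h1, h2, h3⟩ := ih w' u (by simpa using hw) (by simpa using hu)
          (fun c hc => hun c (List.mem_cons_of_mem b hc))
          (fun c hc => hwn c (List.mem_cons_of_mem a hc))
        have hbu : IsUnit b := hun b (List.mem_cons_self)
        refine ⟨(a * Ring.inverse b) :: ws, by simp [h1], ?_, ?_⟩
        · intro c hc
          rcases List.mem_cons.1 hc with rfl | hc
          · refine (hwn a (List.mem_cons_self)).mul ?_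
            obtain ⟨bu, rfl⟩ := hbu
            rw [Ring.inverse_unit]
            exact Units.isUnit _
          · exact h2 c hc
        · simp only [List.zipWith_cons_cons, h3]
          congr 1
          rw [show a * Ring.inverse b * (b * x) = a * (Ring.inverse b * b) * x from by ring,
            Ring.inverse_mul_cancel _ hbu]
          ring

lemma hasWZSS_zip {t : ℕ} (w S : List (ZMod n)) (hw : w.length = S.length)
    (hwu : ∀ a ∈ w, IsUnit a) (h : HasWZSS (U n) S t) :
    HasWZSS (U n) (List.zipWith (· * ·) w S) t := by
  obtain ⟨ht, T', hsub, hlen, wz⟩ := h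
  obtain ⟨u, hu1, hu2, hu3⟩ := sublist_zipWith_of_sublist hsub w hw
  have huu : ∀ a ∈ u, IsUnit a := fun a ha => hwu a (hu2 a ha)
  have hulen : (List.zipWith (· * ·) u T').length = t := by
    rw [List.length_zipWith, hu1, hlen, min_self]
  obtain ⟨w', hwl, hwA, hsum⟩ := wz
  obtain ⟨ws, h1, h2, h3⟩ := zip_combine T' w' u hwl hu1 huu (fun a ha => hwA a ha)
  refine ⟨ht, _, hu3, hulen, ws, ?_, fun a ha => h2 a ha, ?_⟩
  · rw [h1, hulen, hlen]
  · rw [h3, hsum]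

lemma hasWZSS_unmap_smul {t : ℕ} {c : ZMod n} (hc : IsUnit c) (T : List (ZMod n)) :
    HasWZSS (U n) (T.map (fun y => c * y)) t → HasWZSS (U n) T t := by
  rintro ⟨ht, T', hsub, hlen, w', hwl, hwA, hsum⟩
  obtain ⟨l, hl, rfl⟩ := List.sublist_map_iff.1 hsub
  refine ⟨ht, l, hl, by simpa using hlen, ?_⟩
  refine ⟨w'.map (fun a => a * c), by simpa using hwl, ?_, ?_⟩
  · intro a ha
    obtain ⟨b, hb, rfl⟩ := List.mem_map.1 ha
    exact (hwA b hb).mul hc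
  · have heq : List.zipWith (· * ·) (w'.map (fun a => a * c)) l
        = List.zipWith (· * ·) w' (l.map (fun y => c * y)) := by
      rw [List.zipWith_map_left, List.zipWith_map_right]
      congr 1
      funext a b
      ring
    rw [heq, hsum]

lemma aequiv_length {A : Set (ZMod n)} {S T : List (ZMod n)} (h : AEquiv A S T) :
    T.length = S.length := by
  obtain ⟨c, hc, w, hwl, hwA, hperm⟩ := h
  have := hperm.length_eq
  rw [List.length_map, List.length_zipWith, hwl, min_self] at this
  exact this

lemma hasWZSS_of_aequiv {t : ℕ} {S T : List (ZMod n)} (h : AEquiv (U n) S T)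
    (hS : HasWZSS (U n) S t) : HasWZSS (U n) T t := by
  obtain ⟨c, hc, w, hwl, hwA, hperm⟩ := h
  have h1 : HasWZSS (U n) (List.zipWith (· * ·) w S) t :=
    hasWZSS_zip w S hwl (fun a ha => hwA a ha) hS
  have h2 : HasWZSS (U n) (T.map (fun y => c * y)) t := hasWZSS_perm hperm.symm h1
  exact hasWZSS_unmap_smul hc T h2

end Perm

section Count
variable {α : Type*}

lemma countP_or_disjoint (p q : α → Bool) (l : List α)
    (h : ∀ x, ¬(p x = true ∧ q x = true)) :
    l.countP (fun x => p x || q x) = l.countP p + l.countP q := by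
  induction l with
  | nil => simp
  | cons a l ih =>
    by_cases hp : p a = true <;> by_cases hq : q a = true
    · exact absurd ⟨hp, hq⟩ (h a)
    all_goals simp [List.countP_cons, hp, hq, ih] <;> omega

end Count

section CountNu
variable {r : ℕ}

noncomputable def cnt (r v : ℕ) (S : List (ZMod (2^r))) : ℕ :=
  S.countP (fun x => decide (nu r x = v))

noncomputable def cgt (r v : ℕ) (S : List (ZMod (2^r))) : ℕ :=
  S.countP (fun x => decide (v < nu r x))

noncomputable def clt (r v : ℕ) (S : List (ZMod (2^r))) : ℕ :=
  S.countP (fun x => decide (nu r x < v))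

lemma length_split (v : ℕ) (S : List (ZMod (2^r))) :
    S.length = clt r v S + cnt r v S + cgt r v S := by
  have h1 : S.length = S.countP
      (fun x => decide (nu r x < v) || (decide (nu r x = v) || decide (v < nu r x))) := by
    symm
    rw [List.countP_eq_length]
    intro a _
    simp only [Bool.or_eq_true, decide_eq_true_eq]
    omega
  rw [h1, countP_or_disjoint _ _ _ (by intro x; simp only [Bool.or_eq_true, decide_eq_true_eq]; omega),
    countP_or_disjoint _ _ _ (by intro x; simp only [decide_eq_true_eq]; omega)]
  unfold clt cnt cgt
  omega

lemma clt_zero (S : List (ZMod (2^r))) : clt r 0 S = 0 := by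
  unfold clt
  rw [List.countP_eq_zero]  -- countP = 0 iff no elems
  intro a _
  simp

lemma clt_succ (v : ℕ) (S : List (ZMod (2^r))) :
    clt r (v+1) S = clt r v S + cnt r v S := by
  unfold clt cnt
  rw [← countP_or_disjoint _ _ _ (by intro x; simp only [decide_eq_true_eq]; omega)]
  apply List.countP_congr
  intro x _
  simp only [Bool.or_eq_true, decide_eq_true_eq]
  omega

lemma clt_le (v : ℕ) (S : List (ZMod (2^r))) (h : ∀ w, w < v → cnt r w S ≤ 1) :
    clt r v S ≤ v := by
  induction v with
  | zero => simp [clt_zero]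
  | succ v ih =>
    rw [clt_succ]
    have h1 := ih (fun w hw => h w (by omega))
    have h2 := h v (by omega)
    omega

lemma cnt_zero_eq_count (S : List (ZMod (2^r))) : cnt r r S = S.count 0 := by
  unfold cnt
  rw [List.count_eq_countP]  -- check: count a l = countP (· == a) l? or (a == ·)?
  apply List.countP_congr
  intro x _
  simp [nu_eq_r_iff]

lemma hasWZSS_of_zeros {S : List (ZMod (2^r))} (hz : 2^r ≤ cnt r r S) :
    HasWZSS (U (2^r)) S (2^r) := by
  rw [cnt_zero_eq_count] at hz
  have hsub : List.replicate (2^r) (0 : ZMod (2^r)) <+ S := by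
    rw [← Multiset.replicate_le_coe]
    rw [← Multiset.le_count_iff_replicate_le]
    rw [Multiset.coe_count]
    exact hz
  refine ⟨two_pow_pos r, List.replicate (2^r) 0, hsub, List.length_replicate, ?_⟩
  refine ⟨List.replicate (2^r) 1, by simp, ?_, ?_⟩
  · intro a ha
    rw [List.eq_of_mem_replicate ha]
    exact isUnit_one
  · rw [List.zipWith_replicate]
    simp

lemma hasWZSS_of_even_class {S : List (ZMod (2^r))} (hr : 1 ≤ r) {v e : ℕ} (hv : v < r)
    (he2 : 2 ∣ e) (he1 : 1 ≤ e) (hecnt : e ≤ cnt r v S) (hen : e ≤ 2^r)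
    (hfill : 2^r ≤ e + cgt r v S) :
    HasWZSS (U (2^r)) S (2^r) := by
  set p := fun x : ZMod (2^r) => decide (nu r x = v) with hp
  set q := fun x : ZMod (2^r) => decide (v < nu r x) with hq
  set A := (S.filter p).take e with hA
  set B := (S.filter q).take (2^r - e) with hB
  have hAlen : A.length = e := by
    rw [hA, List.length_take, ← List.countP_eq_length_filter]
    exact min_eq_left hecnt
  have hBlen : B.length = 2^r - e := by
    have hcg : cgt r v S = (S.filter q).length := by
      unfold cgt
      rw [List.countP_eq_length_filter]
    rw [hB, List.length_take]
    exact min_eq_left (by rw [← hcg]; omega)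
  have hAmem : ∀ x ∈ A, nu r x = v := by
    intro x hx
    have := List.mem_filter.1 (List.take_subset _ _ hx)
    simpa [hp] using this.2
  have hBmem : ∀ x ∈ B, v < nu r x := by
    intro x hx
    have := List.mem_filter.1 (List.take_subset _ _ hx)
    simpa [hq] using this.2
  have hsub : (A ++ B) <+~ S := by
    rw [List.subperm_ext_iff]
    intro x hx
    rw [List.count_append]
    by_cases hxv : nu r x = v
    · have hxB : x ∉ B := fun hxB => by have := hBmem x hxB; omega
      rw [List.count_eq_zero.2 hxB, Nat.add_zero]
      calc List.count x A ≤ List.count x (S.filter p) :=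
            (List.take_sublist _ _).count_le x
        _ ≤ List.count x S := (List.filter_sublist).count_le x
    · have hxA : x ∉ A := fun hxA => hxv (hAmem x hxA)
      rw [List.count_eq_zero.2 hxA, Nat.zero_add]
      calc List.count x B ≤ List.count x (S.filter q) :=
            (List.take_sublist _ _).count_le x
        _ ≤ List.count x S := (List.filter_sublist).count_le x
  apply hasWZSS_of_subperm (two_pow_pos r) hsub
  · rw [List.length_append, hAlen, hBlen]
    omega
  · exact wzsum_construct hr hv A B hAmem hBmem (by rw [hAlen]; exact he2)
      (by rw [← List.length_pos_iff_ne_nil]; omega)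

end CountNu

section Main
variable {r : ℕ}

lemma cgt_eq_cnt_top (m : ℕ) (hm : m + 1 = r) (S : List (ZMod (2^r))) :
    cgt r m S = cnt r r S := by
  unfold cgt cnt
  apply List.countP_congr
  intro x _
  have := nu_le x
  simp only [decide_eq_true_eq]
  omega

lemma wzsum_profile (hr : 1 ≤ r) {T : List (ZMod (2^r))} (hz : IsWZSum (U (2^r)) T)
    (hne : ∃ x ∈ T, x ≠ 0) :
    ∃ v, v < r ∧ (∀ x ∈ T, v ≤ nu r x) ∧ 1 ≤ cnt r v T ∧ 2 ∣ cnt r v T := by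
  obtain ⟨x₀, hx₀T, hx₀⟩ := hne
  have hne' : {m | ∃ x ∈ T, nu r x = m}.Nonempty := ⟨nu r x₀, x₀, hx₀T, rfl⟩
  set v := sInf {m | ∃ x ∈ T, nu r x = m} with hv
  obtain ⟨x₁, hx₁T, hx₁⟩ := Nat.sInf_mem hne'
  have hmin : ∀ x ∈ T, v ≤ nu r x := fun x hx => Nat.sInf_le ⟨x, hx, rfl⟩
  have hvr : v < r := lt_of_le_of_lt (hmin x₀ hx₀T) (nu_lt hx₀)
  obtain ⟨w, hwl, hwA, hsum⟩ := hz
  refine ⟨v, hvr, hmin, ?_,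
    even_countP_min' hr hvr T w hwl (fun a ha => hwA a ha) hsum hmin⟩
  have : 0 < T.countP (fun x => decide (nu r x = v)) :=
    List.countP_pos_iff.2 ⟨x₁, hx₁T, decide_eq_true (hx₁.trans hv.symm)⟩
  unfold cnt
  omega

lemma no_wzss_zeros_lt {S : List (ZMod (2^r))} (hno : ¬ HasWZSS (U (2^r)) S (2^r)) :
    cnt r r S < 2^r := by
  by_contra h
  push_neg at h
  exact hno (hasWZSS_of_zeros h)

lemma two_dvd_two_pow (hr : 1 ≤ r) : 2 ∣ 2^r :=
  ⟨2^(r-1), by rw [← pow_succ']; congr 1; omega⟩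

lemma no_wzss_cnt_lt (hr : 1 ≤ r) {S : List (ZMod (2^r))}
    (hno : ¬ HasWZSS (U (2^r)) S (2^r)) {v : ℕ} (hv : v < r) :
    cnt r v S < 2^r := by
  by_contra h
  push_neg at h
  exact hno (hasWZSS_of_even_class hr hv (two_dvd_two_pow hr) (two_pow_pos r) h le_rfl
    (by omega))

lemma step_odd (hr : 1 ≤ r) {S : List (ZMod (2^r))} (hno : ¬ HasWZSS (U (2^r)) S (2^r))
    {v : ℕ} (hv : v < r) (h2 : 2 ≤ cnt r v S) : cnt r v S + cgt r v S ≤ 2^r := by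
  have hC := no_wzss_cnt_lt hr hno hv
  by_contra h
  push_neg at h
  exact hno (hasWZSS_of_even_class hr hv (e := 2 * (cnt r v S / 2)) ⟨_, rfl⟩
    (by omega) (by omega) (by omega) (by omega))

lemma step_even (hr : 1 ≤ r) {S : List (ZMod (2^r))} (hno : ¬ HasWZSS (U (2^r)) S (2^r))
    {v : ℕ} (hv : v < r) (h2 : 2 ≤ cnt r v S) (he : 2 ∣ cnt r v S) :
    cnt r v S + cgt r v S < 2^r := by
  have hC := no_wzss_cnt_lt hr hno hv
  by_contra h
  push_neg at h
  exact hno (hasWZSS_of_even_class hr hv he (by omega) le_rfl (by omega) (by omega))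

lemma clt_le_pred {S : List (ZMod (2^r))} (v m : ℕ) (hvm : v < m)
    (h : ∀ w, w < m → cnt r w S ≤ 1) (h0 : cnt r v S = 0) : clt r m S + 1 ≤ m := by
  induction m with
  | zero => omega
  | succ m ih =>
    rw [clt_succ]
    rcases Nat.lt_or_ge v m with hv | hv
    · have := ih hv (fun w hw => h w (by omega))
      have := h m (by omega)
      omega
    · have hvm' : v = m := by omega
      subst hvm'
      have := clt_le v S (fun w hw => h w (by omega))
      omega

lemma clt_eq_of_ones {S : List (ZMod (2^r))} (m : ℕ) (h : ∀ w, w < m → cnt r w S = 1) :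
    clt r m S = m := by
  induction m with
  | zero => simp [clt_zero]
  | succ m ih =>
    rw [clt_succ, ih (fun w hw => h w (by omega)), h m (by omega)]

lemma hn4 (hr : 2 ≤ r) : 4 ≤ 2^r := by
  calc (4:ℕ) = 2^2 := rfl
    _ ≤ 2^r := Nat.pow_le_pow_right (by norm_num) hr

lemma necessity (hr : 2 ≤ r) {S : List (ZMod (2^r))} (hlen : S.length = 2^r + r - 1)
    (hno : ¬ HasWZSS (U (2^r)) S (2^r)) :
    (∀ v ≤ r - 2, cnt r v S = 1) ∧ ¬ 2 ∣ cnt r (r-1) S ∧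
      cnt r (r-1) S ≤ 2^r ∧ cnt r r S = 2^r - cnt r (r-1) S := by
  have hr1 : 1 ≤ r := by omega
  have h4 := hn4 hr
  have hsmall : ∀ v, v ≤ r - 2 → cnt r v S ≤ 1 := by
    intro v
    induction v using Nat.strong_induction_on with
    | _ v ih =>
      intro hv
      by_contra hc
      push_neg at hc
      have hlt : clt r v S ≤ v := clt_le v S (fun w hw => ih w hw (by omega))
      have hso := step_odd hr1 hno (v := v) (by omega) hc
      have hsp := length_split (r := r) v S
      omega
  have hltr1 : clt r (r-1) S ≤ r - 1 := clt_le _ S (fun w hw => hsmall w (by omega))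
  have hz := no_wzss_zeros_lt hno
  have hgt_eq : cgt r (r-1) S = cnt r r S := cgt_eq_cnt_top (r-1) (by omega) S
  have hsp := length_split (r := r) (r-1) S
  have hodd : ¬ 2 ∣ cnt r (r-1) S := by
    intro heven
    rcases Nat.eq_zero_or_pos (cnt r (r-1) S) with h0 | hpos
    · omega
    · have h2 : 2 ≤ cnt r (r-1) S := by omega
      have := step_even hr1 hno (by omega) h2 heven
      omega
  have hone : ∀ v, v ≤ r - 2 → cnt r v S = 1 := by
    intro v hv
    rcases Nat.eq_zero_or_pos (cnt r v S) with h0 | hpos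
    · exfalso
      have hlt2 : clt r (r-1) S + 1 ≤ r - 1 :=
        clt_le_pred v (r-1) (by omega) (fun w hw => hsmall w (by omega)) h0
      rcases Nat.lt_or_ge (cnt r (r-1) S) 2 with hc2 | hc2
      · omega
      · have := step_odd hr1 hno (v := r-1) (by omega) hc2
        omega
    · have := hsmall v hv
      omega
  have hclt_eq : clt r (r-1) S = r - 1 :=
    clt_eq_of_ones (r-1) (fun w hw => hone w (by omega))
  exact ⟨hone, hodd, by omega, by omega⟩

lemma sufficiency (hr : 2 ≤ r) {S : List (ZMod (2^r))} {κ : ℕ}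
    (h1 : ∀ v ≤ r - 2, cnt r v S = 1) (hodd : ¬ 2 ∣ κ) (hκ : cnt r (r-1) S = κ)
    (hz : cnt r r S = 2^r - κ) (hκn : κ ≤ 2^r) :
    ¬ HasWZSS (U (2^r)) S (2^r) := by
  have h4 := hn4 hr
  rintro ⟨-, T, hsub, hlen, hwz⟩
  by_cases hne : ∃ x ∈ T, x ≠ 0
  · obtain ⟨v, hvr, hmin, hpos, heven⟩ := wzsum_profile (by omega) hwz hne
    have hle : cnt r v T ≤ cnt r v S := hsub.countP_le
    rcases Nat.lt_or_ge v (r-1) with hv | hv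
    · have := h1 v (by omega)
      omega
    · have hveq : v = r - 1 := by omega
      subst hveq
      have hTsplit : T.length = clt r (r-1) T + cnt r (r-1) T + cgt r (r-1) T :=
        length_split _ T
      have hclt0 : clt r (r-1) T = 0 := by
        unfold clt
        rw [List.countP_eq_zero]
        intro x hx
        have := hmin x hx
        simp only [decide_eq_true_eq]
        omega
      have hgt_eq : cgt r (r-1) T = cnt r r T := cgt_eq_cnt_top (r-1) (by omega) T
      have hle2 : cnt r r T ≤ cnt r r S := hsub.countP_le
      omega
  · push_neg at hne
    have hallz : cnt r r T = T.length := by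
      unfold cnt
      rw [List.countP_eq_length]
      intro a ha
      simp only [decide_eq_true_eq, nu_eq_r_iff]
      exact hne a ha
    have hle2 : cnt r r T ≤ cnt r r S := hsub.countP_le
    omega

lemma upper_bound (hr : 2 ≤ r) {S : List (ZMod (2^r))} (hlen : S.length = 2^r + r) :
    HasWZSS (U (2^r)) S (2^r) := by
  by_contra hno
  have hr1 : 1 ≤ r := by omega
  have h4 := hn4 hr
  have hsmall : ∀ v, v < r → cnt r v S ≤ 1 := by
    intro v
    induction v using Nat.strong_induction_on with
    | _ v ih =>
      intro hv
      by_contra hc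
      push_neg at hc
      have hlt : clt r v S ≤ v := clt_le v S (fun w hw => ih w hw (by omega))
      have hso := step_odd hr1 hno hv hc
      have hsp := length_split (r := r) v S
      omega
  have hltr : clt r r S ≤ r := clt_le r S (fun w hw => hsmall w hw)
  have hz := no_wzss_zeros_lt hno
  have hsp := length_split (r := r) r S
  have hgt0 : cgt r r S = 0 := by
    unfold cgt
    rw [List.countP_eq_zero]
    intro x hx
    have := nu_le x
    simp only [decide_eq_true_eq]
    omega
  omega

end Main

section Final
variable {r : ℕ}

lemma countP_eq_range (m v : ℕ) :
    (List.range m).countP (fun j => decide (j = v)) = if v < m then 1 else 0 := by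
  induction m with
  | zero => simp
  | succ m ih =>
    rw [List.range_succ, List.countP_append, ih]
    simp only [List.countP_cons, List.countP_nil, decide_eq_true_eq]
    split_ifs <;> omega

noncomputable def Tseq (r κ : ℕ) : List (ZMod (2^r)) :=
  ((List.range (r-1)).map fun i => (2:ZMod (2^r))^i)
    ++ List.replicate κ ((2:ZMod (2^r))^(r-1)) ++ List.replicate (2^r - κ) 0

lemma cnt_Tseq (hr : 2 ≤ r) (κ v : ℕ) :
    cnt r v (Tseq r κ) = (if v < r - 1 then 1 else 0) + (if v = r - 1 then κ else 0)
      + (if v = r then 2^r - κ else 0) := by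
  have hr1 : 1 ≤ r := by omega
  unfold cnt Tseq
  rw [List.countP_append, List.countP_append]
  congr 1
  · congr 1
    · rw [List.countP_map]
      have hcongr : ((List.range (r-1)).countP
          ((fun x => decide (nu r x = v)) ∘ (fun i => (2:ZMod (2^r))^i)))
          = (List.range (r-1)).countP (fun j => decide (j = v)) := by
        apply List.countP_congr
        intro j hj
        have hj' : j < r - 1 := List.mem_range.1 hj
        simp only [Function.comp, decide_eq_true_eq]
        rw [nu_two_pow hr1 (by omega)]
      rw [hcongr, countP_eq_range]
    · rw [List.countP_replicate]
      rw [nu_two_pow hr1 (by omega)]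
      simp only [decide_eq_true_eq]
      split_ifs <;> omega
  · rw [List.countP_replicate]
    simp only [nu_zero, decide_eq_true_eq]
    split_ifs <;> omega

lemma length_Tseq (κ : ℕ) (hκ : κ ≤ 2^r) (hr : 1 ≤ r) :
    (Tseq r κ).length = 2^r + r - 1 := by
  unfold Tseq
  simp only [List.length_append, List.length_map, List.length_range, List.length_replicate]
  omega

lemma mem_Tseq {κ : ℕ} {x : ZMod (2^r)} (hx : x ∈ Tseq r κ) :
    x = 0 ∨ ∃ i ≤ r - 1, x = (2:ZMod (2^r))^i := by
  unfold Tseq at hx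
  simp only [List.mem_append, List.mem_map, List.mem_range, List.mem_replicate] at hx
  rcases hx with (⟨i, hi, rfl⟩ | ⟨-, rfl⟩) | ⟨-, rfl⟩
  · exact Or.inr ⟨i, by omega, rfl⟩
  · exact Or.inr ⟨r - 1, le_rfl, rfl⟩
  · exact Or.inl rfl

lemma count_pow_eq_cnt (hr1 : 1 ≤ r) {T : List (ZMod (2^r))}
    (hmem : ∀ x ∈ T, x = 0 ∨ ∃ i ≤ r - 1, x = (2:ZMod (2^r))^i) {i : ℕ} (hi : i < r) :
    T.count ((2:ZMod (2^r))^i) = cnt r i T := by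
  unfold cnt
  rw [List.count_eq_countP]
  apply List.countP_congr
  intro x hx
  simp only [decide_eq_true_eq, beq_iff_eq]
  constructor
  · rintro rfl
    exact nu_two_pow hr1 hi
  · intro h
    rcases hmem x hx with rfl | ⟨j, hj, rfl⟩
    · rw [nu_zero] at h; omega
    · rw [nu_two_pow hr1 (by omega)] at h
      rw [h]

noncomputable def gmap (r : ℕ) (x : ZMod (2^r)) : ZMod (2^r) :=
  if x = 0 then 0 else 2^(nu r x)

lemma wt_mul (x : ZMod (2^r)) : wt r x * x = gmap r x := by
  unfold gmap
  split
  · next h => rw [h, mul_zero]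
  · next h => exact wt_spec h

lemma count_map_gmap (a : ZMod (2^r)) (S : List (ZMod (2^r))) :
    (S.map (gmap r)).count a = S.countP (fun x => decide (gmap r x = a)) := by
  rw [List.count_eq_countP, List.countP_map]
  apply List.countP_congr
  intro x _
  simp [beq_iff_eq]

lemma perm_gmap (hr : 2 ≤ r) {S : List (ZMod (2^r))}
    (hone : ∀ v ≤ r - 2, cnt r v S = 1)
    (hzS : cnt r r S = 2^r - cnt r (r-1) S)
    (hκn : cnt r (r-1) S ≤ 2^r) :
    (S.map (gmap r)).Perm (Tseq r (cnt r (r-1) S)) := by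
  have hr1 : 1 ≤ r := by omega
  rw [List.perm_iff_count]
  intro a
  set κ := cnt r (r-1) S with hκ
  rw [count_map_gmap]
  by_cases ha0 : a = 0
  · subst ha0
    have h1 : S.countP (fun x => decide (gmap r x = 0)) = cnt r r S := by
      unfold cnt
      apply List.countP_congr
      intro x _
      simp only [decide_eq_true_eq]
      unfold gmap
      by_cases hx : x = 0
      · simp [hx, nu_zero]
      · simp only [hx, if_false]
        constructor
        · intro h
          exact absurd h (two_pow_ne_zero (nu_lt hx))
        · intro h
          exact absurd h (fun h' => (nu_lt hx).ne h')
    rw [h1, ← cnt_zero_eq_count, cnt_Tseq hr]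
    split_ifs <;> omega
  · by_cases hai : ∃ i, i < r ∧ a = (2:ZMod (2^r))^i
    · obtain ⟨i, hi, rfl⟩ := hai
      have h1 : S.countP (fun x => decide (gmap r x = (2:ZMod (2^r))^i)) = cnt r i S := by
        unfold cnt
        apply List.countP_congr
        intro x _
        simp only [decide_eq_true_eq]
        unfold gmap
        by_cases hx : x = 0
        · simp only [hx, if_true, nu_zero]
          constructor
          · intro h
            exact absurd h.symm (two_pow_ne_zero hi)
          · intro h
            omega
        · simp only [hx, if_false]
          rw [two_pow_inj hr1 (nu_lt hx) hi]
      rw [h1, count_pow_eq_cnt hr1 (fun x hx => mem_Tseq hx) hi, cnt_Tseq hr]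
      rcases Nat.lt_or_ge i (r-1) with h | h
      · rw [hone i (by omega)]
        split_ifs <;> omega
      · have : i = r - 1 := by omega
        subst this
        split_ifs <;> omega
    · push_neg at hai
      have h1 : S.countP (fun x => decide (gmap r x = a)) = 0 := by
        rw [List.countP_eq_zero]
        intro x _
        simp only [decide_eq_true_eq]
        unfold gmap
        by_cases hx : x = 0
        · simp only [hx, if_true]
          exact fun h => ha0 h.symm
        · simp only [hx, if_false]
          exact fun h => (hai (nu r x) (nu_lt hx)) h.symm
      rw [h1, eq_comm, List.count_eq_zero]
      intro ha
      rcases mem_Tseq ha with rfl | ⟨i, hi, rfl⟩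
      · exact ha0 rfl
      · exact hai i (by omega) rfl

lemma counts_to_cnt (hr : 2 ≤ r) {T : List (ZMod (2^r))}
    (hTlen : T.length = 2^r + r - 1)
    (hcnt1 : ∀ i ≤ r - 2, T.count ((2:ZMod (2^r))^i) = 1)
    (hmem : ∀ x ∈ T, x = 0 ∨ ∃ i ≤ r - 1, x = (2:ZMod (2^r))^i) :
    (∀ v ≤ r - 2, cnt r v T = 1) ∧ cnt r (r-1) T = T.count ((2:ZMod (2^r))^(r-1)) ∧
      cnt r r T = 2^r - T.count ((2:ZMod (2^r))^(r-1)) ∧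
      T.count ((2:ZMod (2^r))^(r-1)) ≤ 2^r := by
  have hr1 : 1 ≤ r := by omega
  have h4 := hn4 hr
  have honeT : ∀ v ≤ r - 2, cnt r v T = 1 := by
    intro v hv
    rw [← count_pow_eq_cnt hr1 hmem (by omega)]
    exact hcnt1 v hv
  have hκeq : cnt r (r-1) T = T.count ((2:ZMod (2^r))^(r-1)) :=
    (count_pow_eq_cnt hr1 hmem (by omega)).symm
  have hclt : clt r (r-1) T = r - 1 :=
    clt_eq_of_ones (r-1) (fun w hw => honeT w (by omega))
  have hgt_eq : cgt r (r-1) T = cnt r r T := cgt_eq_cnt_top (r-1) (by omega) T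
  have hsp := length_split (r := r) (r-1) T
  refine ⟨honeT, hκeq, by omega, by omega⟩

lemma gaoC_eq (hr : 2 ≤ r) : GaoC (2^r) (U (2^r)) = 2^r + r := by
  have h4 := hn4 hr
  have hT1 : ¬ HasWZSS (U (2^r)) (Tseq r 1) (2^r) := by
    apply sufficiency hr (κ := 1)
    · intro v hv
      rw [cnt_Tseq hr]
      split_ifs <;> omega
    · omega
    · rw [cnt_Tseq hr]
      split_ifs <;> omega
    · rw [cnt_Tseq hr]
      split_ifs <;> omega
    · omega
  have hlenT1 : (Tseq r 1).length = 2^r + r - 1 := length_Tseq 1 (by omega) (by omega)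
  unfold GaoC
  apply _root_.le_antisymm
  · apply Nat.sInf_le
    exact ⟨by omega, fun S hS => upper_bound hr hS⟩
  · apply le_csInf
    · exact ⟨2^r + r, ⟨by omega, fun S hS => upper_bound hr hS⟩⟩
    rintro k ⟨hk0, hk⟩
    by_contra hlt
    push_neg at hlt
    have hkle : k ≤ (Tseq r 1).length := by omega
    obtain ⟨hpos, T', hsub, hlen', hwz⟩ :=
      hk ((Tseq r 1).take k) (by rw [List.length_take]; omega)
    exact hT1 ⟨hpos, T', hsub.trans (List.take_sublist _ _), hlen', hwz⟩

end Final

end Aux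

/-- For `n = 2 ^ r`, `r ≥ 2`: a sequence in `ZMod n` is a `U(n)`-extremal sequence for the
Gao constant iff it is `U(n)`-equivalent to a sequence `T` of length `n + r - 1` in which
`2 ^ i` occurs exactly once for each `0 ≤ i ≤ r - 2`, `2 ^ (r - 1)` occurs an odd number
of times, and all remaining terms are zero. -/
theorem gao_extremal_iff_two_pow (r : ℕ) (hr : 2 ≤ r) (S : List (ZMod (2 ^ r))) :
    IsGaoExtremal (2 ^ r) (U (2 ^ r)) S ↔
      ∃ T : List (ZMod (2 ^ r)),
        AEquiv (U (2 ^ r)) S T ∧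
        T.length = 2 ^ r + r - 1 ∧
        (∀ i ≤ r - 2, T.count ((2 : ZMod (2 ^ r)) ^ i) = 1) ∧
        Odd (T.count ((2 : ZMod (2 ^ r)) ^ (r - 1))) ∧
        (∀ x ∈ T, x = 0 ∨ ∃ i ≤ r - 1, x = (2 : ZMod (2 ^ r)) ^ i) := by
  have h4 := hn4 hr
  have hr1 : 1 ≤ r := by omega
  have hgao := gaoC_eq hr
  constructor
  · rintro ⟨hlen, hno⟩
    rw [hgao] at hlen
    obtain ⟨hone, hodd, hκn, hzS⟩ := necessity hr hlen hno
    refine ⟨Tseq r (cnt r (r-1) S), ?_, length_Tseq _ hκn hr1, ?_, ?_, fun x hx => mem_Tseq hx⟩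
    · refine ⟨1, isUnit_one, S.map (wt r), List.length_map _, ?_, ?_⟩
      · intro a ha
        obtain ⟨x, hx, rfl⟩ := List.mem_map.1 ha
        exact wt_unit x
      · have h1 : (Tseq r (cnt r (r-1) S)).map (fun y => (1:ZMod (2^r)) * y)
            = Tseq r (cnt r (r-1) S) := by
          simp
        rw [h1]
        have h2 : List.zipWith (· * ·) (S.map (wt r)) S = S.map (gmap r) := by
          rw [List.zipWith_map_left, List.zipWith_self]
          exact List.map_congr_left (fun x _ => wt_mul x)
        rw [h2]
        exact (perm_gmap hr hone hzS hκn).symm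
    · intro i hi
      rw [count_pow_eq_cnt hr1 (fun x hx => mem_Tseq hx) (by omega : i < r), cnt_Tseq hr]
      split_ifs <;> omega
    · rw [count_pow_eq_cnt hr1 (fun x hx => mem_Tseq hx) (by omega : r - 1 < r), cnt_Tseq hr]
      rw [Nat.odd_iff]
      split_ifs <;> omega
  · rintro ⟨T, haeq, hTlen, hcnt1, hcodd, hmem⟩
    obtain ⟨honeT, hκeq, hzT, hκle⟩ := counts_to_cnt hr hTlen hcnt1 hmem
    rw [Nat.odd_iff] at hcodd
    have hnoT : ¬ HasWZSS (U (2^r)) T (2^r) := by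
      apply sufficiency hr honeT (κ := T.count ((2:ZMod (2^r))^(r-1)))
        (by omega) hκeq hzT hκle
    constructor
    · rw [hgao, ← hTlen]
      exact (aequiv_length haeq).symm
    · intro hS
      exact hnoT (hasWZSS_of_aequiv haeq hS)
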